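/- For every tree T, the zero forcing number equals the path cover number: Z(T) = pc(T). -/

import Mathlib

/-- The forcing process: vertices that eventually get colored starting from `S`.
A colored vertex with exactly one uncolored neighbor forces that neighbor. -/
inductive SimpleGraph.Forced {V : Type*} (G : SimpleGraph V) (S : Set V) : V → Prop
  | init (v : V) (hv : v ∈ S) : SimpleGraph.Forced G S v
  | force (u w : V) (hu : SimpleGraph.Forced G S u) (hadj : G.Adj u w)
      (huniq : ∀ x, G.Adj u x → x ≠ w → SimpleGraph.Forced G S x) :
      SimpleGraph.Forced G S w

/-- `S` is a zero forcing set if the forcing process colors every vertex. -/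
def SimpleGraph.IsZeroForcingSet {V : Type*} (G : SimpleGraph V) (S : Set V) : Prop :=
  ∀ v, G.Forced S v

/-- The zero forcing number `Z(G)`. -/
noncomputable def SimpleGraph.zeroForcingNumber {V : Type*} (G : SimpleGraph V) : ℕ :=
  sInf {n | ∃ S : Set V, G.IsZeroForcingSet S ∧ S.ncard = n}

/-- A total forcing set: a zero forcing set inducing a subgraph without isolated vertices. -/
def SimpleGraph.IsTotalForcingSet {V : Type*} (G : SimpleGraph V) (S : Set V) : Prop :=
  G.IsZeroForcingSet S ∧ ∀ v ∈ S, ∃ u ∈ S, G.Adj v u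

/-- The total forcing number `F_t(G)`. -/
noncomputable def SimpleGraph.totalForcingNumber {V : Type*} (G : SimpleGraph V) : ℕ :=
  sInf {n | ∃ S : Set V, G.IsTotalForcingSet S ∧ S.ncard = n}

/-- A set of vertices that is the vertex set of a path (as a subgraph) of `G`. -/
def SimpleGraph.IsPathSet {V : Type*} (G : SimpleGraph V) (P : Set V) : Prop :=
  ∃ (u v : V) (w : G.Walk u v), w.IsPath ∧ {x | x ∈ w.support} = P

/-- A path cover: a collection of vertex-disjoint paths partitioning the vertex set. -/
def SimpleGraph.IsPathCover {V : Type*} (G : SimpleGraph V) (P : Set (Set V)) : Prop :=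
  (∀ Q ∈ P, G.IsPathSet Q) ∧ P.PairwiseDisjoint id ∧ ⋃₀ P = Set.univ

/-- The path cover number `pc(G)`. -/
noncomputable def SimpleGraph.pathCoverNumber {V : Type*} (G : SimpleGraph V) : ℕ :=
  sInf {n | ∃ P : Set (Set V), G.IsPathCover P ∧ P.ncard = n}

/-- The matching number `α'(G)`. -/
noncomputable def SimpleGraph.matchingNumber {V : Type*} (G : SimpleGraph V) : ℕ :=
  sSup {n | ∃ M : G.Subgraph, M.IsMatching ∧ M.edgeSet.ncard = n}

/-- A leaf is a vertex with exactly one neighbor. -/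
def SimpleGraph.IsLeaf {V : Type*} (G : SimpleGraph V) (v : V) : Prop :=
  (G.neighborSet v).ncard = 1

namespace ZFCproof

open SimpleGraph

variable {V : Type*} [Fintype V] (G : SimpleGraph V) (S : Set V)

/-- One round of forcing. -/
def step (A : Set V) : Set V :=
  A ∪ {w | ∃ u ∈ A, G.Adj u w ∧ ∀ x, G.Adj u x → x ≠ w → x ∈ A}

def iter : ℕ → Set V
  | 0 => S
  | n + 1 => step G (iter n)

lemma iter_subset_succ (n : ℕ) : iter G S n ⊆ iter G S (n + 1) :=
  Set.subset_union_left

lemma iter_mono {m n : ℕ} (h : m ≤ n) : iter G S m ⊆ iter G S n := by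
  induction n with
  | zero => simp_all
  | succ n ih =>
    rcases Nat.lt_or_ge m (n+1) with h' | h'
    · exact (ih (Nat.lt_succ_iff.mp h')).trans (iter_subset_succ G S n)
    · have : m = n + 1 := le_antisymm h h'
      subst this; exact subset_rfl

/-- Time at which a vertex gets colored. -/
noncomputable def tm (v : V) : ℕ := sInf {n | v ∈ iter G S n}

lemma mem_iter_tm {v : V} (h : ∃ n, v ∈ iter G S n) : v ∈ iter G S (tm G S v) :=
  Nat.sInf_mem h

lemma tm_le {v : V} {n : ℕ} (h : v ∈ iter G S n) : tm G S v ≤ n :=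
  Nat.sInf_le h

lemma forced_iff {v : V} : G.Forced S v ↔ ∃ n, v ∈ iter G S n := by
  constructor
  · intro h
    induction h with
    | init v hv => exact ⟨0, hv⟩
    | force u w hu hadj huniq ihu ihx =>
      classical
      set N := Finset.univ.sup (tm G S) with hN
      refine ⟨N + 1, Or.inr ⟨u, ?_, hadj, fun x hx hxw => ?_⟩⟩
      · exact iter_mono G S (Finset.le_sup (Finset.mem_univ u)) (mem_iter_tm G S ihu)
      · exact iter_mono G S (Finset.le_sup (Finset.mem_univ x)) (mem_iter_tm G S (ihx x hx hxw))
  · rintro ⟨n, hn⟩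
    induction n generalizing v with
    | zero => exact Forced.init v hn
    | succ n ih =>
      rcases hn with hn | ⟨u, hu, hadj, hforce⟩
      · exact ih hn
      · exact Forced.force u v (ih hu) hadj fun x hx hxw => ih (hforce x hx hxw)

lemma tm_eq_zero_iff (hS : G.IsZeroForcingSet S) {v : V} : tm G S v = 0 ↔ v ∈ S := by
  constructor
  · intro h
    have := mem_iter_tm G S (forced_iff G S |>.mp (hS v))
    rwa [h] at this
  · intro h
    exact Nat.le_zero.mp (tm_le G S (show v ∈ iter G S 0 from h))

lemma exists_parent (hS : G.IsZeroForcingSet S) {v : V} (h0 : tm G S v ≠ 0) :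
    ∃ u ∈ iter G S (tm G S v - 1), G.Adj u v ∧
      ∀ x, G.Adj u x → x ≠ v → x ∈ iter G S (tm G S v - 1) := by
  have hv := mem_iter_tm G S (forced_iff G S |>.mp (hS v))
  obtain ⟨k, hk⟩ := Nat.exists_eq_succ_of_ne_zero h0
  rw [hk] at hv
  rcases hv with hv | ⟨u, hu, hadj, hforce⟩
  · exact absurd (tm_le G S hv) (by omega)
  · refine ⟨u, by rw [hk]; simpa using hu, hadj, fun x hx hxv => by
      rw [hk]; simpa using hforce x hx hxv⟩

open Classical in
noncomputable def par (v : V) : V :=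
  if h : G.IsZeroForcingSet S ∧ tm G S v ≠ 0 then (exists_parent G S h.1 h.2).choose else v

lemma par_spec (hS : G.IsZeroForcingSet S) {v : V} (h0 : tm G S v ≠ 0) :
    par G S v ∈ iter G S (tm G S v - 1) ∧ G.Adj (par G S v) v ∧
      ∀ x, G.Adj (par G S v) x → x ≠ v → x ∈ iter G S (tm G S v - 1) := by
  rw [par, dif_pos ⟨hS, h0⟩]
  exact (exists_parent G S hS h0).choose_spec

lemma tm_par_lt (hS : G.IsZeroForcingSet S) {v : V} (h0 : tm G S v ≠ 0) :
    tm G S (par G S v) < tm G S v := by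
  have := tm_le G S (par_spec G S hS h0).1
  omega

lemma par_inj (hS : G.IsZeroForcingSet S) {v w : V} (hv : tm G S v ≠ 0) (hw : tm G S w ≠ 0)
    (h : par G S v = par G S w) : v = w := by
  by_contra hne
  obtain ⟨_, hadjv, hxv⟩ := par_spec G S hS hv
  obtain ⟨_, hadjw, hxw⟩ := par_spec G S hS hw
  have h1 : tm G S w ≤ tm G S v - 1 :=
    tm_le G S (hxv w (h ▸ hadjw) (Ne.symm hne))
  have h2 : tm G S v ≤ tm G S w - 1 :=
    tm_le G S (hxw v (h ▸ hadjv) hne)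
  omega

open Classical in
noncomputable def nxt (u : V) : Option V :=
  if h : ∃ v, tm G S v ≠ 0 ∧ par G S v = u then some h.choose else none

lemma nxt_spec {u v : V} (h : nxt G S u = some v) : tm G S v ≠ 0 ∧ par G S v = u := by
  by_cases h' : ∃ w, tm G S w ≠ 0 ∧ par G S w = u
  · rw [nxt, dif_pos h'] at h
    cases h
    exact h'.choose_spec
  · rw [nxt, dif_neg h'] at h
    cases h

lemma nxt_complete (hS : G.IsZeroForcingSet S) {v : V} (h0 : tm G S v ≠ 0) :
    nxt G S (par G S v) = some v := by
  classical
  have h' : ∃ w, tm G S w ≠ 0 ∧ par G S w = par G S v := ⟨v, h0, rfl⟩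
  rw [nxt, dif_pos h']
  congr 1
  exact par_inj G S hS h'.choose_spec.1 h0 h'.choose_spec.2

noncomputable def chainL : ℕ → V → List V
  | 0, v => [v]
  | n + 1, v =>
    match nxt G S v with
    | none => [v]
    | some w => v :: chainL n w

lemma chainL_head (n : ℕ) (v : V) : ∃ tl, chainL G S n v = v :: tl := by
  cases n with
  | zero => exact ⟨[], rfl⟩
  | succ n =>
    rw [chainL]
    cases nxt G S v with
    | none => exact ⟨[], rfl⟩
    | some w => exact ⟨_, rfl⟩

lemma self_mem_chainL (n : ℕ) (v : V) : v ∈ chainL G S n v := by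
  obtain ⟨tl, h⟩ := chainL_head G S n v
  rw [h]; exact List.mem_cons_self

lemma chainL_subset_succ (n : ℕ) : ∀ (v : V) {x}, x ∈ chainL G S n v → x ∈ chainL G S (n+1) v := by
  induction n with
  | zero =>
    intro v x hx
    simp only [chainL, List.mem_singleton] at hx
    subst hx
    exact self_mem_chainL G S 1 _
  | succ n ih =>
    intro v x hx
    rw [chainL] at hx ⊢
    cases h : nxt G S v with
    | none => rwa [h] at hx
    | some w =>
      rw [h] at hx
      rcases List.mem_cons.mp hx with h' | h'
      · subst h'; exact List.mem_cons_self
      · exact List.mem_cons.mpr (Or.inr (ih w h'))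

lemma chainL_mono {m n : ℕ} (h : m ≤ n) (v : V) {x : V} (hx : x ∈ chainL G S m v) :
    x ∈ chainL G S n v := by
  induction n with
  | zero => have : m = 0 := Nat.le_zero.mp h; subst this; exact hx
  | succ n ih =>
    rcases Nat.lt_or_ge m (n+1) with h' | h'
    · exact chainL_subset_succ G S n v (ih (Nat.lt_succ_iff.mp h'))
    · have : m = n + 1 := le_antisymm h h'
      subst this; exact hx

lemma chainL_step (hS : G.IsZeroForcingSet S) :
    ∀ (n : ℕ) (v x y : V), x ∈ chainL G S n v → nxt G S x = some y →
      y ∈ chainL G S (n + 1) v := by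
  intro n
  induction n with
  | zero =>
    intro v x y hx hn
    simp only [chainL, List.mem_singleton] at hx
    subst hx
    rw [chainL, hn]
    exact List.mem_cons.mpr (Or.inr (self_mem_chainL G S 0 y))
  | succ n ih =>
    intro v x y hx hn
    rw [chainL] at hx
    cases h : nxt G S v with
    | none =>
      rw [h] at hx
      simp only [List.mem_singleton] at hx
      subst hx
      rw [hn] at h; cases h
    | some w =>
      rw [h] at hx
      rcases List.mem_cons.mp hx with h' | h'
      · subst h'
        rw [hn] at h
        cases h
        rw [chainL, hn]
        exact List.mem_cons.mpr (Or.inr (self_mem_chainL G S (n+1) y))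
      · rw [chainL, h]
        exact List.mem_cons.mpr (Or.inr (ih w x y h' hn))

lemma chainL_chain' (hS : G.IsZeroForcingSet S) (n : ℕ) (v : V) :
    List.Chain' G.Adj (chainL G S n v) := by
  induction n generalizing v with
  | zero => simp [chainL]; exact List.isChain_singleton _
  | succ n ih =>
    rw [chainL]
    cases h : nxt G S v with
    | none => simp; exact List.isChain_singleton _
    | some w =>
      obtain ⟨h0, hpar⟩ := nxt_spec G S h
      refine List.isChain_cons.mpr ⟨?_, ih w⟩
      intro y hy
      obtain ⟨tl, htl⟩ := chainL_head G S n w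
      simp [htl] at hy
      subst hy
      exact hpar ▸ (par_spec G S hS h0).2.1

lemma chainL_chain'_tm (hS : G.IsZeroForcingSet S) (n : ℕ) (v : V) :
    List.Chain' (fun a b => tm G S a < tm G S b) (chainL G S n v) := by
  induction n generalizing v with
  | zero => simp [chainL]; exact List.isChain_singleton _
  | succ n ih =>
    rw [chainL]
    cases h : nxt G S v with
    | none => simp; exact List.isChain_singleton _
    | some w =>
      obtain ⟨h0, hpar⟩ := nxt_spec G S h
      refine List.isChain_cons.mpr ⟨?_, ih w⟩
      intro y hy
      obtain ⟨tl, htl⟩ := chainL_head G S n w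
      simp [htl] at hy
      subst hy
      exact hpar ▸ tm_par_lt G S hS h0

lemma chainL_nodup (hS : G.IsZeroForcingSet S) (n : ℕ) (v : V) :
    (chainL G S n v).Nodup := by
  have h := chainL_chain'_tm G S hS n v
  have : IsTrans V (fun a b => tm G S a < tm G S b) := ⟨fun _ _ _ => lt_trans⟩
  exact (List.isChain_iff_pairwise.mp h).imp fun hlt => fun he => by subst he; exact lt_irrefl _ hlt

noncomputable def rootv (hS : G.IsZeroForcingSet S) : V → V := fun v =>
  if h : tm G S v = 0 then v else rootv hS (par G S v)
  termination_by v => tm G S v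
  decreasing_by exact tm_par_lt G S hS h

lemma rootv_eq_self (hS : G.IsZeroForcingSet S) {v : V} (h : tm G S v = 0) :
    rootv G S hS v = v := by rw [rootv, dif_pos h]

lemma rootv_par (hS : G.IsZeroForcingSet S) {v : V} (h : tm G S v ≠ 0) :
    rootv G S hS v = rootv G S hS (par G S v) := by rw [rootv, dif_neg h]

lemma rootv_chainL (hS : G.IsZeroForcingSet S) (n : ℕ) (v : V) {x : V}
    (hx : x ∈ chainL G S n v) : rootv G S hS x = rootv G S hS v := by
  induction n generalizing v with
  | zero => simp only [chainL, List.mem_singleton] at hx; rw [hx]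
  | succ n ih =>
    rw [chainL] at hx
    cases h : nxt G S v with
    | none =>
      rw [h] at hx
      simp only [List.mem_singleton] at hx; rw [hx]
    | some w =>
      rw [h] at hx
      rcases List.mem_cons.mp hx with h' | h'
      · rw [h']
      · obtain ⟨h0, hpar⟩ := nxt_spec G S h
        rw [ih w h', ← hpar]
        exact rootv_par G S hS h0

lemma coverage_aux (hS : G.IsZeroForcingSet S) :
    ∀ k (v : V), tm G S v = k → ∃ s ∈ S, ∃ n, n ≤ tm G S v ∧ v ∈ chainL G S n s := by
  intro k
  induction k using Nat.strong_induction_on with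
  | _ k ih =>
    intro v hk
    by_cases h0 : tm G S v = 0
    · exact ⟨v, (tm_eq_zero_iff G S hS).mp h0, 0, by omega, self_mem_chainL G S 0 v⟩
    · have hlt := tm_par_lt G S hS h0
      obtain ⟨s, hs, n, hn, hmem⟩ := ih (tm G S (par G S v)) (by omega) (par G S v) rfl
      refine ⟨s, hs, n + 1, by omega, ?_⟩
      exact chainL_step G S hS n s (par G S v) v hmem (nxt_complete G S hS h0)

lemma coverage (hS : G.IsZeroForcingSet S) (v : V) :
    ∃ s ∈ S, ∃ n, n ≤ tm G S v ∧ v ∈ chainL G S n s :=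
  coverage_aux G S hS _ v rfl

lemma exists_walk_of_chain {W : Type*} (G' : SimpleGraph W) :
    ∀ (l : List W) (a : W), List.Chain' G'.Adj (a :: l) →
      ∃ (b : W) (w : G'.Walk a b), w.support = a :: l := by
  intro l
  induction l with
  | nil => exact fun a _ => ⟨a, SimpleGraph.Walk.nil, rfl⟩
  | cons b l ih =>
    intro a hc
    rw [show List.Chain' G'.Adj (a :: b :: l) ↔ _ from List.isChain_cons_cons] at hc
    obtain ⟨c, w, hw⟩ := ih b hc.2
    exact ⟨c, SimpleGraph.Walk.cons hc.1 w, by rw [SimpleGraph.Walk.support_cons, hw]⟩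

/-- The main lemma of part A: from a zero forcing set we get a path cover of the same size. -/
lemma exists_cover (hS : G.IsZeroForcingSet S) :
    ∃ P : Set (Set V), G.IsPathCover P ∧ P.ncard ≤ S.ncard := by
  classical
  set N := Finset.univ.sup (tm G S) with hN
  set C : V → Set V := fun s => {x | x ∈ chainL G S N s} with hC
  refine ⟨C '' S, ⟨?_, ?_, ?_⟩, Set.ncard_image_le (Set.toFinite S)⟩
  · rintro Q ⟨s, hs, rfl⟩
    obtain ⟨tl, htl⟩ := chainL_head G S N s
    have hch := chainL_chain' G S hS N s
    rw [htl] at hch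
    obtain ⟨b, w, hw⟩ := exists_walk_of_chain G tl s hch
    refine ⟨s, b, w, ?_, ?_⟩
    · rw [SimpleGraph.Walk.isPath_def, hw, ← htl]
      exact chainL_nodup G S hS N s
    · ext x
      simp only [Set.mem_setOf_eq, hC, hw, ← htl]
  · rintro Q ⟨s, hs, rfl⟩ Q' ⟨s', hs', rfl⟩ hne
    refine Set.disjoint_left.mpr fun {x} hx hx' => hne ?_
    have h1 := rootv_chainL G S hS N s hx
    have h2 := rootv_chainL G S hS N s' hx'
    rw [rootv_eq_self G S hS ((tm_eq_zero_iff G S hS).mpr hs)] at h1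
    rw [rootv_eq_self G S hS ((tm_eq_zero_iff G S hS).mpr hs')] at h2
    rw [show s = s' from h1 ▸ h2 ▸ rfl]
  · refine Set.eq_univ_of_forall fun v => ?_
    obtain ⟨s, hs, n, hn, hmem⟩ := coverage G S hS v
    exact ⟨C s, ⟨s, hs, rfl⟩, chainL_mono G S (hn.trans (Finset.le_sup (Finset.mem_univ v))) s hmem⟩

/-- pc(G) ≤ Z(G) for any graph on a finite vertex type. -/
lemma pc_le_Z : G.pathCoverNumber ≤ G.zeroForcingNumber := by
  have hne : {n | ∃ S : Set V, G.IsZeroForcingSet S ∧ S.ncard = n}.Nonempty :=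
    ⟨(Set.univ : Set V).ncard, Set.univ, fun v => SimpleGraph.Forced.init v (Set.mem_univ v), rfl⟩
  obtain ⟨S, hS, hcard⟩ := Nat.sInf_mem hne
  obtain ⟨P, hP, hle⟩ := exists_cover G S hS
  calc G.pathCoverNumber ≤ P.ncard := Nat.sInf_le ⟨P, hP, rfl⟩
    _ ≤ S.ncard := hle
    _ = G.zeroForcingNumber := hcard

end ZFCproof

namespace TreeZF

open SimpleGraph

variable {V : Type*} [DecidableEq V] (T : SimpleGraph V) (hT : T.IsTree) (r : V)

/-- The unique path from `v` to the root `r`. -/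
noncomputable def pa (v : V) : T.Walk v r := (hT.existsUnique_path v r).choose

lemma pa_isPath (v : V) : (pa T hT r v).IsPath := (hT.existsUnique_path v r).choose_spec.1

lemma pa_unique {v : V} (q : T.Walk v r) (hq : q.IsPath) : q = pa T hT r v :=
  (hT.existsUnique_path v r).choose_spec.2 q hq

/-- Depth of a vertex in the tree rooted at `r`. -/
noncomputable def depth (v : V) : ℕ := (pa T hT r v).length

lemma pa_r : pa T hT r r = SimpleGraph.Walk.nil := (pa_unique T hT r _ (by simp)).symm

lemma depth_r : depth T hT r r = 0 := by rw [depth, pa_r]; rfl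

lemma eq_r_of_depth_eq_zero {v : V} (h : depth T hT r v = 0) : v = r :=
  SimpleGraph.Walk.eq_of_length_eq_zero h

/-- The dropUntil of a root path is a root path. -/
lemma pa_drop {v x : V} (hx : x ∈ (pa T hT r v).support) :
    (pa T hT r v).dropUntil x hx = pa T hT r x :=
  pa_unique T hT r _ ((pa_isPath T hT r v).dropUntil hx)

/-- `Anc a b` : `a` is an ancestor of `b` (lies on the path from `b` to the root). -/
def Anc (a b : V) : Prop := a ∈ (pa T hT r b).support

lemma anc_refl (v : V) : Anc T hT r v v := SimpleGraph.Walk.start_mem_support _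

lemma anc_trans {a b c : V} (hab : Anc T hT r a b) (hbc : Anc T hT r b c) :
    Anc T hT r a c := by
  unfold Anc at *
  have := pa_drop T hT r hbc
  have h2 : a ∈ ((pa T hT r c).dropUntil b hbc).support := this ▸ hab
  exact SimpleGraph.Walk.support_dropUntil_subset _ hbc h2

lemma depth_le_of_anc {a b : V} (h : Anc T hT r a b) : depth T hT r a ≤ depth T hT r b := by
  have hsp := SimpleGraph.Walk.take_spec (pa T hT r b) h
  have hlen : ((pa T hT r b).takeUntil a h).length + ((pa T hT r b).dropUntil a h).length
      = (pa T hT r b).length := by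
    rw [← SimpleGraph.Walk.length_append, hsp]
  rw [pa_drop T hT r h] at hlen
  unfold depth
  omega

lemma depth_lt_of_anc {a b : V} (h : Anc T hT r a b) (hne : a ≠ b) :
    depth T hT r a < depth T hT r b := by
  have hsp := SimpleGraph.Walk.take_spec (pa T hT r b) h
  have hlen : ((pa T hT r b).takeUntil a h).length + ((pa T hT r b).dropUntil a h).length
      = (pa T hT r b).length := by
    rw [← SimpleGraph.Walk.length_append, hsp]
  rw [pa_drop T hT r h] at hlen
  have h0 : ((pa T hT r b).takeUntil a h).length ≠ 0 := by
    intro h0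
    exact hne (SimpleGraph.Walk.eq_of_length_eq_zero h0).symm
  unfold depth
  omega

/-- The parent of a vertex: second vertex on its root path. -/
noncomputable def parent (v : V) : V := (pa T hT r v).getVert 1

lemma pa_cons {v : V} (hv : v ≠ r) :
    ∃ (h : T.Adj v (parent T hT r v)),
      pa T hT r v = SimpleGraph.Walk.cons h (pa T hT r (parent T hT r v)) := by
  cases hpa : pa T hT r v with
  | nil => exact absurd rfl hv
  | @cons _ u _ h q =>
    have hq : q.IsPath := by
      have := pa_isPath T hT r v
      rw [hpa] at this
      exact this.of_cons
    have hqu : q = pa T hT r u := pa_unique T hT r q hq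
    have hu : parent T hT r v = u := by
      rw [parent, hpa, SimpleGraph.Walk.getVert_cons_succ, SimpleGraph.Walk.getVert_zero]
    subst hu
    exact ⟨h, by rw [hqu]⟩

lemma adj_parent {v : V} (hv : v ≠ r) : T.Adj v (parent T hT r v) := (pa_cons T hT r hv).1

lemma anc_parent {v : V} (hv : v ≠ r) : Anc T hT r (parent T hT r v) v := by
  obtain ⟨h, hcons⟩ := pa_cons T hT r hv
  show parent T hT r v ∈ (pa T hT r v).support
  rw [hcons]
  simp

lemma depth_parent {v : V} (hv : v ≠ r) :
    depth T hT r v = depth T hT r (parent T hT r v) + 1 := by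
  obtain ⟨h, hcons⟩ := pa_cons T hT r hv
  unfold depth
  rw [hcons, SimpleGraph.Walk.length_cons]

/-- Every edge of the tree is a parent-child edge. -/
lemma edge_parent {a b : V} (hab : T.Adj a b) :
    parent T hT r a = b ∨ (b ≠ r ∧ parent T hT r b = a) := by
  by_cases hb : b ∈ (pa T hT r a).support
  · left
    have hta : ((pa T hT r a).takeUntil b hb).IsPath := (pa_isPath T hT r a).takeUntil hb
    have hedge : (SimpleGraph.Walk.cons hab SimpleGraph.Walk.nil : T.Walk a b).IsPath := by
      simp [hab.ne]
    have := ((hT.existsUnique_path a b).choose_spec.2 _ hta).trans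
      ((hT.existsUnique_path a b).choose_spec.2 _ hedge).symm
    have hsp := SimpleGraph.Walk.take_spec (pa T hT r a) hb
    rw [this] at hsp
    rw [parent, ← hsp]
    simp [SimpleGraph.Walk.getVert_cons_succ, SimpleGraph.Walk.getVert_zero]
  · right
    have hbr : b ≠ r := fun h => hb (h ▸ SimpleGraph.Walk.end_mem_support _)
    have hcons : (SimpleGraph.Walk.cons (hab.symm) (pa T hT r a)).IsPath :=
      (pa_isPath T hT r a).cons hb
    have := pa_unique T hT r _ hcons
    refine ⟨hbr, ?_⟩
    rw [parent, ← this, SimpleGraph.Walk.getVert_cons_succ, SimpleGraph.Walk.getVert_zero]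

end TreeZF

namespace TreeZF

open SimpleGraph
open SimpleGraph.Walk

variable {V : Type*} [DecidableEq V] (T : SimpleGraph V) (hT : T.IsTree) (r : V)

include hT in
lemma path_unique' {a b : V} (p q : T.Walk a b) (hp : p.IsPath) (hq : q.IsPath) : p = q :=
  ((hT.existsUnique_path a b).choose_spec.2 p hp).trans
    ((hT.existsUnique_path a b).choose_spec.2 q hq).symm

/-- If a path starting at `y` avoids `y`'s parent then everything on it is a descendant. -/
lemma anc_of_isPath {y c : V} (q : T.Walk y c) :
    q.IsPath → y ≠ r → parent T hT r y ∉ q.support →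
      ∀ x ∈ q.support, Anc T hT r y x := by
  induction q with
  | nil =>
    intro _ _ _ x hx
    rw [support_nil, List.mem_singleton] at hx
    exact hx ▸ anc_refl T hT r _
  | @cons y d c hyd q ih =>
    intro hq hyr hpar x hx
    have hdp : d ≠ r ∧ parent T hT r d = y := by
      rcases edge_parent T hT r hyd with h | h
      · exfalso
        apply hpar
        rw [h, support_cons]
        exact List.mem_cons.mpr (Or.inr (start_mem_support q))
      · exact h
    have hyd' : Anc T hT r y d := hdp.2 ▸ anc_parent T hT r hdp.1
    rw [support_cons, List.mem_cons] at hx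
    rcases hx with rfl | hx
    · exact anc_refl T hT r x
    · have hy_not : y ∉ q.support := ((cons_isPath_iff hyd q).mp hq).2
      have := ih hq.of_cons hdp.1 (hdp.2.symm ▸ hy_not) x hx
      exact anc_trans T hT r hyd' this

/-- Between any two vertices of a path there is a path inside it. -/
lemma exists_subpath {a b x y : V} (w : T.Walk a b) (hw : w.IsPath)
    (hx : x ∈ w.support) (hy : y ∈ w.support) :
    ∃ (q : T.Walk x y), q.IsPath ∧ ∀ z ∈ q.support, z ∈ w.support := by
  by_cases h : y ∈ (w.dropUntil x hx).support
  · refine ⟨(w.dropUntil x hx).takeUntil y h, (hw.dropUntil hx).takeUntil h, fun z hz => ?_⟩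
    exact support_dropUntil_subset w hx (support_takeUntil_subset _ h hz)
  · have hy' : y ∈ (w.takeUntil x hx).support := by
      have := (mem_support_append_iff (w.takeUntil x hx) (w.dropUntil x hx)).mp
        (by rw [take_spec w hx]; exact hy)
      tauto
    have hyrev : y ∈ (w.takeUntil x hx).reverse.support := by
      rwa [support_reverse, List.mem_reverse]
    refine ⟨((w.takeUntil x hx).reverse).takeUntil y hyrev,
      ((hw.takeUntil hx).reverse).takeUntil hyrev, fun z hz => ?_⟩
    have := support_takeUntil_subset _ hyrev hz
    rw [support_reverse, List.mem_reverse] at this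
    exact support_takeUntil_subset w hx this

include hT in
lemma support_eq_of_adj {x y : V} (q : T.Walk x y) (hq : q.IsPath) (hadj : T.Adj x y) :
    q.support = [x, y] := by
  have hedge : (Walk.cons hadj Walk.nil : T.Walk x y).IsPath := by simp [hadj.ne]
  rw [path_unique' T hT q (Walk.cons hadj Walk.nil) hq hedge]
  simp

include hT in
/-- Forcing marches along a path whose external neighbours are already forced. -/
lemma march {S : Set V} {a b : V} (q : T.Walk a b) :
    q.IsPath → T.Forced S a →
    (∀ x ∈ q.support, x ≠ b → ∀ y, T.Adj x y → y ∉ q.support → T.Forced S y) →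
    ∀ x ∈ q.support, T.Forced S x := by
  induction q with
  | nil =>
    intro _ ha _ x hx
    rw [support_nil, List.mem_singleton] at hx
    exact hx ▸ ha
  | @cons a c b' hab q ih =>
    intro hq ha hext x hx
    have hnotin : a ∉ q.support := ((cons_isPath_iff hab q).mp hq).2
    have hanb : a ≠ b' := fun h => hnotin (h ▸ end_mem_support q)
    have hc : T.Forced S c := by
      refine Forced.force a c ha hab fun z hz hzc => ?_
      by_cases hzs : z ∈ (Walk.cons hab q).support
      · exfalso
        rw [support_cons, List.mem_cons] at hzs
        rcases hzs with rfl | hzs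
        · exact T.loopless.irrefl z hz
        · -- chord
          have htp : (q.takeUntil z hzs).IsPath := hq.of_cons.takeUntil hzs
          have hnot : a ∉ (q.takeUntil z hzs).support :=
            fun hc' => hnotin (support_takeUntil_subset q hzs hc')
          have hpath : (Walk.cons hab (q.takeUntil z hzs)).IsPath := htp.cons hnot
          have := support_eq_of_adj T hT _ hpath hz
          rw [support_cons, support_eq_cons (q.takeUntil z hzs)] at this
          have hcz : c = z := by
            injection this with h1 h2
            injection h2 with h3 h4
          exact hzc hcz.symm
      · exact hext a (start_mem_support _) hanb z hz hzs
    rw [support_cons, List.mem_cons] at hx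
    rcases hx with rfl | hx
    · exact ha
    · refine ih hq.of_cons hc (fun x' hx' hxb y hy hys => ?_) x hx
      by_cases hya : y = a
      · exact hya ▸ ha
      · refine hext x' (by rw [support_cons]; exact List.mem_cons_of_mem _ hx') hxb y hy ?_
        rw [support_cons, List.mem_cons]
        tauto

end TreeZF

namespace TreeZF

open SimpleGraph
open SimpleGraph.Walk

variable {V : Type*} [DecidableEq V] {T : SimpleGraph V} (hT : T.IsTree) (r : V)

/-- Extraction of a pendant path from a path cover with at least two paths. -/
lemma extraction [Finite V] {P : Set (Set V)} (hP : T.IsPathCover P) (h2 : 2 ≤ P.ncard) :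
    ∃ Q ∈ P, ∃ m : V, m ∈ Q ∧ m ≠ r ∧ (∀ x ∈ Q, depth T hT r m ≤ depth T hT r x) ∧
      (∀ x ∈ Q, ∀ y, y ∉ Q → T.Adj x y → x = m ∧ y = parent T hT r m) := by
  obtain ⟨hps, hdisj, huniv⟩ := hP
  -- the set of "tops"
  set M : Set V := {v | ∃ Q ∈ P, v ∈ Q ∧ ∀ x ∈ Q, depth T hT r v ≤ depth T hT r x} with hM
  -- there are two distinct paths
  have h2' : ∃ Q₁ ∈ P, ∃ Q₂ ∈ P, Q₁ ≠ Q₂ := by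
    rcases (Set.one_lt_ncard (Set.toFinite P)).mp h2 with ⟨a, ha, b, hb, hab⟩
    exact ⟨a, ha, b, hb, hab⟩
  obtain ⟨Q₁, hQ₁, Q₂, hQ₂, hQne⟩ := h2'
  -- some path avoids the root
  have hrfree : ∃ Q' ∈ P, r ∉ Q' := by
    by_cases h1 : r ∈ Q₁
    · refine ⟨Q₂, hQ₂, fun h2'' => ?_⟩
      exact Set.disjoint_left.mp (hdisj hQ₁ hQ₂ hQne) h1 h2''
    · exact ⟨Q₁, hQ₁, h1⟩
  obtain ⟨Q', hQ', hrQ'⟩ := hrfree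
  -- tops exist
  have htop : ∀ Q ∈ P, ∃ v, v ∈ Q ∧ ∀ x ∈ Q, depth T hT r v ≤ depth T hT r x := by
    intro Q hQ
    obtain ⟨a, b, w, hw, hws⟩ := hps Q hQ
    have hne : Q.Nonempty := ⟨a, hws ▸ start_mem_support w⟩
    obtain ⟨v, hv, hmin⟩ := Set.exists_min_image Q (depth T hT r) (Set.toFinite Q) hne
    exact ⟨v, hv, hmin⟩
  have hMne : M.Nonempty := by
    obtain ⟨v, hv, hmin⟩ := htop Q' hQ'
    exact ⟨v, Q', hQ', hv, hmin⟩
  obtain ⟨m, hmM, hmmax⟩ := Set.exists_max_image M (depth T hT r) (Set.toFinite M) hMne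
  obtain ⟨Q, hQ, hmQ, hmmin⟩ := hmM
  -- m is not the root
  have hmr : m ≠ r := by
    obtain ⟨v', hv', hmin'⟩ := htop Q' hQ'
    have hv'M : v' ∈ M := ⟨Q', hQ', hv', hmin'⟩
    have h1 : v' ≠ r := fun h => hrQ' (h ▸ hv')
    have h2'' : depth T hT r v' ≠ 0 := fun h => h1 (eq_r_of_depth_eq_zero T hT r h)
    have := hmmax v' hv'M
    intro hmr'
    rw [hmr', depth_r] at this
    omega
  refine ⟨Q, hQ, m, hmQ, hmr, hmmin, ?_⟩
  intro x hx y hy hadj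
  obtain ⟨a, b, w, hw, hws⟩ := hps Q hQ
  have hxr : x ≠ r := by
    intro h
    have := hmmin x hx
    rw [h, depth_r] at this
    exact hmr (eq_r_of_depth_eq_zero T hT r (by omega))
  rcases edge_parent T hT r hadj with hca | ⟨hyr, hca⟩
  · -- y is the parent of x : show x = m
    have hxm : x = m := by
      by_contra hxm
      have hxs : x ∈ w.support := by rw [← Set.mem_setOf_eq (p := fun z => z ∈ w.support)]; exact hws ▸ hx
      have hms : m ∈ w.support := by rw [← Set.mem_setOf_eq (p := fun z => z ∈ w.support)]; exact hws ▸ hmQ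
      obtain ⟨q, hq, hqsub⟩ := exists_subpath T w hw hxs hms
      have hpar_not : parent T hT r x ∉ q.support := by
        intro hc
        have : parent T hT r x ∈ Q := hws ▸ (hqsub _ hc)
        exact hy (hca ▸ this)
      have hanc := anc_of_isPath T hT r q hq hxr hpar_not m (end_mem_support q)
      have := depth_lt_of_anc T hT r hanc hxm
      have := hmmin x hx
      omega
    exact ⟨hxm, hxm ▸ hca.symm⟩
  · -- x is the parent of y : contradiction via maximality
    exfalso
    obtain ⟨Qy, hQy, hyQy⟩ : ∃ Qy ∈ P, y ∈ Qy := by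
      have : y ∈ ⋃₀ P := huniv ▸ Set.mem_univ y
      exact this
    have hQyQ : Qy ≠ Q := fun h => hy (h ▸ hyQy)
    obtain ⟨a', b', w', hw', hws'⟩ := hps Qy hQy
    -- y is the top of Qy
    have hytop : ∀ x' ∈ Qy, depth T hT r y ≤ depth T hT r x' := by
      intro x' hx'
      have hys : y ∈ w'.support := by
        rw [← Set.mem_setOf_eq (p := fun z => z ∈ w'.support)]; exact hws' ▸ hyQy
      have hxs' : x' ∈ w'.support := by
        rw [← Set.mem_setOf_eq (p := fun z => z ∈ w'.support)]; exact hws' ▸ hx'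
      obtain ⟨q, hq, hqsub⟩ := exists_subpath T w' hw' hys hxs'
      have hpar_not : parent T hT r y ∉ q.support := by
        intro hc
        have h1 : parent T hT r y ∈ Qy := hws' ▸ (hqsub _ hc)
        rw [hca] at h1
        exact Set.disjoint_left.mp (hdisj hQy hQ hQyQ) h1 hx
      exact depth_le_of_anc T hT r (anc_of_isPath T hT r q hq hyr hpar_not x' (end_mem_support q))
    have hyM : y ∈ M := ⟨Qy, hQy, hyQy, hytop⟩
    have h1 := hmmax y hyM
    have h2'' := hmmin x hx
    have h3 : depth T hT r y = depth T hT r x + 1 := hca ▸ depth_parent T hT r hyr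
    omega

/-- Root paths of vertices outside `Q` avoid `Q`. -/
lemma pa_avoid {Q : Set V} {m : V} (hmr : m ≠ r) (hrQ : r ∉ Q)
    (hcross : ∀ x ∈ Q, ∀ y, y ∉ Q → T.Adj x y → x = m ∧ y = parent T hT r m) :
    ∀ y, y ∉ Q → ∀ z ∈ (pa T hT r y).support, z ∉ Q := by
  have : ∀ n, ∀ y, depth T hT r y = n → y ∉ Q → ∀ z ∈ (pa T hT r y).support, z ∉ Q := by
    intro n
    induction n using Nat.strong_induction_on with
    | _ n ih =>
      intro y hd hy z hz
      by_cases hyr : y = r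
      · subst hyr
        rw [pa_r, support_nil, List.mem_singleton] at hz
        exact hz ▸ hrQ
      · obtain ⟨hadj, hcons⟩ := pa_cons T hT r hyr
        have hpnotQ : parent T hT r y ∉ Q := by
          intro hpQ
          obtain ⟨h1, h2⟩ := hcross _ hpQ y hy hadj.symm
          have hd1 : depth T hT r y = depth T hT r m + 1 := h1 ▸ depth_parent T hT r hyr
          have hd2 : depth T hT r m = depth T hT r y + 1 := h2 ▸ depth_parent T hT r hmr
          omega
        rw [hcons, support_cons, List.mem_cons] at hz
        rcases hz with rfl | hz
        · exact hy
        · have hdp : depth T hT r (parent T hT r y) < n := by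
            have := depth_parent T hT r hyr
            omega
          exact ih _ hdp (parent T hT r y) rfl hpnotQ z hz
  exact fun y => this (depth T hT r y) y rfl

end TreeZF

namespace TreeZF

open SimpleGraph
open SimpleGraph.Walk

variable {V : Type*} {T : SimpleGraph V}

/-- Transfer a walk whose support lies in `s` to the induced subgraph. -/
lemma walk_transfer {s : Set V} :
    ∀ {a b : V} (w : T.Walk a b) (_ : ∀ x ∈ w.support, x ∈ s) (ha : a ∈ s) (hb : b ∈ s),
      ∃ (w' : (T.induce s).Walk ⟨a, ha⟩ ⟨b, hb⟩), w'.support.map Subtype.val = w.support := by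
  intro a b w
  induction w with
  | nil =>
    intro _ ha _
    exact ⟨Walk.nil, by simp⟩
  | @cons a c b hac w ih =>
    intro hsub ha hb
    have hc : c ∈ s := hsub c (by rw [support_cons]; exact List.mem_cons_of_mem _ (start_mem_support w))
    obtain ⟨w', hw'⟩ := ih (fun x hx => hsub x (by rw [support_cons]; exact List.mem_cons_of_mem _ hx)) hc hb
    have hadj' : (T.induce s).Adj ⟨a, ha⟩ ⟨c, hc⟩ := hac
    exact ⟨Walk.cons hadj' w', by rw [support_cons, List.map_cons, hw', support_cons]⟩

/-- Transfer forcing in an induced subgraph back to the big graph. -/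
lemma transfer_forced {s : Set V} {S' : Set ↥s} {Sb : Set V}
    (hinit : ∀ v : ↥s, v ∈ S' → T.Forced Sb ↑v)
    (hcross : ∀ (u : ↥s) (x : V), T.Adj ↑u x → x ∉ s → T.Forced Sb x) :
    ∀ (v : ↥s), (T.induce s).Forced S' v → T.Forced Sb ↑v := by
  intro v hv
  induction hv with
  | init v hv => exact hinit v hv
  | force u w hu hadj huniq ihu ihx =>
    refine SimpleGraph.Forced.force (G := T) ↑u ↑w ihu (by exact hadj) fun x hx hxw => ?_
    by_cases hxs : x ∈ s
    · have hadj' : (T.induce s).Adj u ⟨x, hxs⟩ := hx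
      exact ihx ⟨x, hxs⟩ hadj' (fun h => hxw (congrArg Subtype.val h))
    · exact hcross u x hx hxs

/-- An induced subgraph of a tree that is nonempty and connected is a tree. -/
lemma induce_isTree (hT : T.IsTree) {s : Set V} (r : V) (hr : r ∈ s)
    (hwalk : ∀ a : ↥s, (T.induce s).Reachable a ⟨r, hr⟩) : (T.induce s).IsTree := by
  constructor
  · haveI : Nonempty ↥s := ⟨⟨r, hr⟩⟩
    exact ⟨fun a b => (hwalk a).trans (hwalk b).symm⟩
  · intro v c hc
    have := hc.map (f := (SimpleGraph.Embedding.induce s).toHom)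
      (Subtype.val_injective)
    exact hT.2 _ this

end TreeZF

namespace TreeZF

open SimpleGraph
open SimpleGraph.Walk

universe u

lemma Z_le_pc_aux : ∀ (n : ℕ) {V : Type u} [Fintype V] [DecidableEq V] (T : SimpleGraph V),
    T.IsTree → Nat.card V ≤ n → T.zeroForcingNumber ≤ T.pathCoverNumber := by
  intro n
  induction n with
  | zero =>
    intro V _ _ T hT hcard
    haveI : Nonempty V := hT.1.nonempty
    have : 0 < Nat.card V := Nat.card_pos
    omega
  | succ n ih =>
    intro V _ _ T hT hcard
    classical
    -- a minimum path cover
    have hpcne : {k | ∃ P : Set (Set V), T.IsPathCover P ∧ P.ncard = k}.Nonempty := by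
      refine ⟨(Set.range (fun v : V => ({v} : Set V))).ncard, Set.range _, ⟨?_, ?_, ?_⟩, rfl⟩
      · rintro Q ⟨v, rfl⟩
        exact ⟨v, v, Walk.nil, by simp, by ext x; simp⟩
      · rintro Q ⟨v, rfl⟩ Q' ⟨v', rfl⟩ hne
        simp only [id]
        refine Set.disjoint_singleton.mpr fun h => hne ?_
        rw [h]
      · ext x
        simp only [Set.mem_sUnion, Set.mem_range, Set.mem_univ, iff_true]
        exact ⟨{x}, ⟨x, rfl⟩, rfl⟩
    obtain ⟨P, hP, hPk⟩ := Nat.sInf_mem hpcne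
    by_cases h2 : 2 ≤ P.ncard
    · -- main case : extract a pendant path
      obtain ⟨rv⟩ := hT.1.nonempty
      obtain ⟨Q, hQP, m, hmQ, hmr, hmmin, hcross⟩ := extraction hT rv hP h2
      have hrQ : rv ∉ Q := by
        intro h
        have := hmmin rv h
        rw [depth_r] at this
        exact hmr (eq_r_of_depth_eq_zero T hT rv (by omega))
      set z := parent T hT rv m with hz
      set s : Set V := Qᶜ with hsdef
      have hzs : z ∈ s := by
        intro hzQ
        have h1 := hmmin z hzQ
        have h2' := depth_parent T hT rv hmr
        rw [← hz] at h2'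
        omega
      have hrs : rv ∈ s := hrQ
      have havoid := pa_avoid hT rv hmr hrQ hcross
      have hreach : ∀ a : ↥s, (T.induce s).Reachable a ⟨rv, hrs⟩ := by
        intro a
        obtain ⟨w', _⟩ := walk_transfer (pa T hT rv ↑a) (fun x hx => havoid ↑a a.2 x hx) a.2 hrs
        exact ⟨w'⟩
      have hT' : (T.induce s).IsTree := induce_isTree hT rv hrs hreach
      haveI : Fintype ↥s := Fintype.ofFinite _
      have hcards : Nat.card ↥s ≤ n := by
        have h1 : Nat.card ↥s < Nat.card V := by
          rw [Nat.card_coe_set_eq, ← Set.ncard_univ]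
          refine Set.ncard_lt_ncard ?_ Set.finite_univ
          refine Set.ssubset_univ_iff.mpr fun h => ?_
          have hms' : m ∈ s := h ▸ Set.mem_univ m
          exact hms' hmQ
        omega
      have hIH := ih (T.induce s) hT' hcards
      -- restricted path cover
      have hP' : (T.induce s).IsPathCover ((fun A => (Subtype.val ⁻¹' A : Set ↥s)) '' (P \ {Q})) := by
        refine ⟨?_, ?_, ?_⟩
        · rintro Q' ⟨A, ⟨hA, hAQ⟩, rfl⟩
          obtain ⟨a', b', wA, hwA, hwAs⟩ := hP.1 A hA
          have hdisjAQ : Disjoint A Q := hP.2.1 hA hQP (by simpa using hAQ)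
          have hsubs : ∀ x ∈ wA.support, x ∈ s :=
            fun x hx => Set.disjoint_left.mp hdisjAQ (hwAs ▸ hx)
          have ha' : a' ∈ s := hsubs a' (start_mem_support wA)
          have hb' : b' ∈ s := hsubs b' (end_mem_support wA)
          obtain ⟨w', hw's⟩ := walk_transfer wA hsubs ha' hb'
          refine ⟨⟨a', ha'⟩, ⟨b', hb'⟩, w', ?_, ?_⟩
          · rw [isPath_def]
            have h1 : (w'.support.map Subtype.val).Nodup := by
              rw [hw's]; exact (isPath_def _).mp hwA
            exact h1.of_map
          · ext x
            simp only [Set.mem_setOf_eq, Set.mem_preimage]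
            constructor
            · intro hx
              have : (x : V) ∈ w'.support.map Subtype.val := List.mem_map_of_mem hx
              rw [hw's] at this
              exact hwAs ▸ this
            · intro hx
              have : (x : V) ∈ wA.support := by
                have := hwAs ▸ hx
                exact this
              rw [← hw's] at this
              obtain ⟨y, hy, hyx⟩ := List.mem_map.mp this
              rwa [← Subtype.val_injective hyx]
        · rintro Q1 ⟨A1, hA1, rfl⟩ Q2 ⟨A2, hA2, rfl⟩ hne
          have hA12 : A1 ≠ A2 := fun h => hne (by rw [h])
          exact (hP.2.1 hA1.1 hA2.1 hA12).preimage _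
        · ext v
          simp only [Set.mem_sUnion, Set.mem_univ, iff_true]
          have : (v : V) ∈ ⋃₀ P := hP.2.2 ▸ Set.mem_univ _
          obtain ⟨A, hA, hvA⟩ := this
          have hAQ : A ≠ Q := fun h => v.2 (h ▸ hvA)
          exact ⟨Subtype.val ⁻¹' A, ⟨A, ⟨hA, hAQ⟩, rfl⟩, hvA⟩
      have hpc' : (T.induce s).pathCoverNumber ≤ P.ncard - 1 := by
        refine le_trans (Nat.sInf_le ⟨_, hP', rfl⟩) ?_
        refine le_trans (Set.ncard_image_le (Set.toFinite _)) ?_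
        rw [Set.ncard_diff_singleton_of_mem hQP]
      -- minimum zero forcing set of the induced tree
      have hZne : {j | ∃ S : Set ↥s, (T.induce s).IsZeroForcingSet S ∧ S.ncard = j}.Nonempty :=
        ⟨(Set.univ : Set ↥s).ncard, Set.univ, fun v => Forced.init v (Set.mem_univ v), rfl⟩
      obtain ⟨S', hS', hS'card⟩ := Nat.sInf_mem hZne
      -- the walk of Q
      obtain ⟨a, b, w, hw, hws⟩ := hP.1 Q hQP
      have hQdef : ∀ x, x ∈ Q ↔ x ∈ w.support := fun x => by rw [← hws]; rfl
      have hms : m ∈ w.support := (hQdef m).mp hmQ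
      set q1 := w.takeUntil m hms with hq1
      set q2 := w.dropUntil m hms with hq2
      have hsplit : ∀ y, y ∈ w.support → (y ∈ q1.support ∨ y ∈ q2.support) := by
        intro y hy
        rw [← take_spec w hms] at hy
        exact (mem_support_append_iff _ _).mp hy
      have hsubQ1 : ∀ x ∈ q1.support, x ∈ Q :=
        fun x hx => (hQdef x).mpr (support_takeUntil_subset w hms hx)
      have hsubQ2 : ∀ x ∈ q2.support, x ∈ Q :=
        fun x hx => (hQdef x).mpr (support_dropUntil_subset w hms hx)
      set Sb : Set V := (Subtype.val '' S') ∪ {a} with hSb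
      have haSb : a ∈ Sb := Set.mem_union_right _ rfl
      -- phase 1 : force along q1 up to m
      have hext1 : ∀ x ∈ q1.support, x ≠ m → ∀ y, T.Adj x y → y ∉ q1.support → T.Forced Sb y := by
        intro x hx hxm y hadj hy
        exfalso
        by_cases hyQ : y ∈ Q
        · have hy2 : y ∈ q2.support := (hsplit y ((hQdef y).mp hyQ)).resolve_left hy
          have hym : y ≠ m := fun h => hy (h ▸ end_mem_support q1)
          set r1 := q1.dropUntil x hx with hr1
          set r2 := q2.takeUntil y hy2 with hr2
          have hr1p : r1.IsPath := (hw.takeUntil hms).dropUntil hx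
          have hr2p : r2.IsPath := (hw.dropUntil hms).takeUntil hy2
          have hwnd : w.support.Nodup := (isPath_def w).mp hw
          have hwnd2 : (q1.support ++ q2.support.tail).Nodup := by
            rwa [← support_append, take_spec w hms]
          have hnd : (r1.append r2).support.Nodup := by
            rw [support_append]
            refine List.Nodup.append ((isPath_def r1).mp hr1p)
              (((isPath_def r2).mp hr2p).tail) ?_
            intro t ht1 ht2
            have htq1 : t ∈ q1.support := support_dropUntil_subset q1 hx ht1
            have htr2 : t ∈ r2.support := List.mem_of_mem_tail ht2
            have htm : t ≠ m := by
              intro h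
              subst h
              have : r2.support = t :: r2.support.tail := support_eq_cons r2
              have hnd2 := (isPath_def r2).mp hr2p
              rw [this] at hnd2 ht2
              exact (List.nodup_cons.mp hnd2).1 ht2
            have htq2 : t ∈ q2.support.tail := by
              have h1 : t ∈ q2.support := support_takeUntil_subset q2 hy2 htr2
              have h2' : q2.support = m :: q2.support.tail := support_eq_cons q2
              rw [h2'] at h1
              exact (List.mem_cons.mp h1).resolve_left htm
            exact (List.disjoint_of_nodup_append hwnd2) htq1 htq2
          have hpath3 : (r1.append r2).IsPath := (isPath_def _).mpr hnd
          have hsupp := support_eq_of_adj T hT _ hpath3 hadj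
          have hm3 : m ∈ (r1.append r2).support := by
            rw [mem_support_append_iff]; exact Or.inl (end_mem_support r1)
          rw [hsupp] at hm3
          rcases List.mem_cons.mp hm3 with h | h
          · exact hxm h.symm
          · rw [List.mem_singleton] at h
            exact hym h.symm
        · exact hxm (hcross x (hsubQ1 x hx) y hyQ hadj).1
      have hph1 : ∀ x ∈ q1.support, T.Forced Sb x :=
        march T hT q1 (hw.takeUntil hms) (Forced.init a haSb) hext1
      have hphm : T.Forced Sb m := hph1 m (end_mem_support q1)
      -- phase 2 : the rest of the tree
      have hph2 : ∀ v : ↥s, T.Forced Sb ↑v := by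
        intro v
        refine transfer_forced ?_ ?_ v (hS' v)
        · intro v' hv'
          exact Forced.init _ (Set.mem_union_left _ ⟨v', hv', rfl⟩)
        · intro u x hadj hxs
          have hxQ : x ∈ Q := by
            by_contra h
            exact hxs h
          have h1 := hcross x hxQ ↑u u.2 hadj.symm
          rw [h1.1]
          exact hphm
      -- phase 3 : the rest of Q
      have hext2 : ∀ x ∈ q2.support, x ≠ b → ∀ y, T.Adj x y → y ∉ q2.support → T.Forced Sb y := by
        intro x hx hxb y hadj hy
        by_cases hyQ : y ∈ Q
        · exact hph1 y ((hsplit y ((hQdef y).mp hyQ)).resolve_right hy)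
        · exact hph2 ⟨y, hyQ⟩
      have hph3 : ∀ x ∈ q2.support, T.Forced Sb x :=
        march T hT q2 (hw.dropUntil hms) hphm hext2
      -- conclusion
      have hZF : T.IsZeroForcingSet Sb := by
        intro v
        by_cases hvQ : v ∈ Q
        · rcases hsplit v ((hQdef v).mp hvQ) with h | h
          · exact hph1 v h
          · exact hph3 v h
        · exact hph2 ⟨v, hvQ⟩
      have hcount : Sb.ncard ≤ S'.ncard + 1 := by
        refine le_trans (Set.ncard_union_le _ _) ?_
        rw [Set.ncard_singleton, Set.ncard_image_of_injective _ Subtype.val_injective]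
      have hfinal : T.zeroForcingNumber ≤ Sb.ncard := Nat.sInf_le ⟨Sb, hZF, rfl⟩
      have hZ'pc : S'.ncard ≤ P.ncard - 1 := by
        rw [hS'card]
        exact hIH.trans hpc'
      have hPk' : P.ncard = T.pathCoverNumber := hPk
      omega
    · -- fewer than two paths
      push_neg at h2
      interval_cases hPn : P.ncard
      · exfalso
        have hPe : P = ∅ := by
          have := Set.ncard_eq_zero (Set.toFinite P)
          exact this.mp hPn
        obtain ⟨v⟩ := hT.1.nonempty
        have := hP.2.2
        rw [hPe] at this
        simp at this
        exact (this ▸ Set.mem_univ v : v ∈ (∅ : Set V))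
      · obtain ⟨Q, rfl⟩ := Set.ncard_eq_one.mp hPn
        have hQuniv : Q = Set.univ := by
          have := hP.2.2
          rwa [Set.sUnion_singleton] at this
        obtain ⟨a, b, w, hw, hws⟩ := hP.1 Q rfl
        have hZF : T.IsZeroForcingSet {a} := by
          intro v
          have hv : v ∈ w.support := by
            have : v ∈ Q := hQuniv ▸ Set.mem_univ v
            rw [← hws] at this
            exact this
          refine march T hT (S := {a}) w hw (Forced.init a (Set.mem_singleton a)) ?_ v hv
          intro x hx hxb y hadj hys
          exfalso
          apply hys
          have : y ∈ Q := hQuniv ▸ Set.mem_univ y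
          rw [← hws] at this
          exact this
        have hmem : ({a} : Set V).ncard ∈ {k | ∃ S : Set V, T.IsZeroForcingSet S ∧ S.ncard = k} :=
          ⟨{a}, hZF, rfl⟩
        have hle := Nat.sInf_le hmem
        rw [Set.ncard_singleton] at hle
        have h1 : T.zeroForcingNumber ≤ 1 := hle
        have h2' : 1 = T.pathCoverNumber := hPk
        omega

end TreeZF

theorem stmt7 {V : Type*} [Fintype V] (T : SimpleGraph V) (hT : T.IsTree) :
    T.zeroForcingNumber = T.pathCoverNumber := by
  classical
  exact le_antisymm (TreeZF.Z_le_pc_aux (Nat.card V) T hT le_rfl) (ZFCproof.pc_le_Z T)
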